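/- The singular points of the vector field Ψ ↦ A(ΨΛΨ⁻¹)Ψ on SO(n,ℝ) (with Λ diagonal with distinct entries) form exactly 2^(n-1) · n! points, namely the signed permutation matrices of determinant 1. -/

import Mathlib

open Matrix

/-- The antisymmetrization `A(L) = L₊ - L₋` of a matrix. -/
def antisymmetrize {n : ℕ} (L : Matrix (Fin n) (Fin n) ℝ) : Matrix (Fin n) (Fin n) ℝ :=
  Matrix.of fun i j => if i < j then L i j else if j < i then -(L i j) else 0

noncomputable def Pm {n : ℕ} (σ : Equiv.Perm (Fin n)) (d : Fin n → ℝ) :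
    Matrix (Fin n) (Fin n) ℝ :=
  (Matrix.of fun i j => if σ i = j then (1 : ℝ) else 0) * Matrix.diagonal d

lemma Pm_apply {n : ℕ} (σ : Equiv.Perm (Fin n)) (d : Fin n → ℝ) (i j : Fin n) :
    Pm σ d i j = if σ i = j then d j else 0 := by
  simp [Pm, Matrix.mul_diagonal, ite_mul]

lemma sum_perm {n : ℕ} (σ : Equiv.Perm (Fin n)) (a b : Fin n → ℝ) (i k : Fin n) :
    ∑ j, (if σ i = j then a j else 0) * (if σ k = j then b j else 0)
      = if i = k then a (σ i) * b (σ i) else 0 := by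
  rw [Finset.sum_eq_single (σ i)]
  · simp only [if_pos rfl]
    by_cases h : i = k
    · subst h; simp
    · rw [if_neg h, if_neg (fun hc => h (σ.injective hc).symm), mul_zero]
  · intro j _ hj
    rw [if_neg (fun hc => hj hc.symm), zero_mul]
  · simp

lemma antisym_eq_zero {n : ℕ} {M : Matrix (Fin n) (Fin n) ℝ}
    (h : ∀ i j, i ≠ j → M i j = 0) : antisymmetrize M = 0 := by
  ext i j
  simp only [antisymmetrize, Matrix.of_apply, Matrix.zero_apply]
  rcases lt_trichotomy i j with hlt | heq | hgt
  · rw [if_pos hlt, h i j hlt.ne]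
  · simp [heq]
  · rw [if_neg (not_lt.2 hgt.le), if_pos hgt, h i j hgt.ne', neg_zero]

-- backward direction
lemma backward {n : ℕ} (lam : Fin n → ℝ) (σ : Equiv.Perm (Fin n)) (d : Fin n → ℝ)
    (hd : ∀ i, d i = 1 ∨ d i = -1) :
    Pm σ d * (Pm σ d)ᵀ = 1 ∧
      antisymmetrize (Pm σ d * Matrix.diagonal lam * (Pm σ d)ᵀ) * Pm σ d = 0 := by
  have hdd : ∀ j, d j * d j = 1 := fun j => mul_self_eq_one_iff.mpr (hd j)
  constructor
  · ext i k
    rw [Matrix.mul_apply]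
    simp only [Matrix.transpose_apply, Pm_apply]
    rw [sum_perm]
    by_cases h : i = k
    · subst h; simp [hdd, Matrix.one_apply]
    · simp [h, Matrix.one_apply_ne h]
  · have hM : ∀ i k, i ≠ k → (Pm σ d * Matrix.diagonal lam * (Pm σ d)ᵀ) i k = 0 := by
      intro i k hik
      rw [Matrix.mul_apply]
      have : ∀ j, (Pm σ d * Matrix.diagonal lam) i j = if σ i = j then d j * lam j else 0 := by
        intro j
        rw [Matrix.mul_diagonal, Pm_apply, ite_mul, zero_mul]
      simp only [this, Matrix.transpose_apply, Pm_apply]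
      rw [sum_perm, if_neg hik]
    rw [antisym_eq_zero hM, zero_mul]
lemma det_Pm {n : ℕ} (σ : Equiv.Perm (Fin n)) (d : Fin n → ℝ) :
    (Pm σ d).det = ((Equiv.Perm.sign σ : ℤ) : ℝ) * ∏ i, d i := by
  have h : (Matrix.of fun i j => if σ i = j then (1 : ℝ) else 0) = σ.permMatrix ℝ := by
    ext i j
    simp [Equiv.Perm.permMatrix, PEquiv.toMatrix, Equiv.toPEquiv, eq_comm]
  rw [Pm, Matrix.det_mul, h, Matrix.det_permutation, Matrix.det_diagonal]



lemma forward {n : ℕ} (lam : Fin n → ℝ) (hlam : Function.Injective lam)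
    {Ψ : Matrix (Fin n) (Fin n) ℝ} (hO : Ψ * Ψᵀ = 1)
    (hA : antisymmetrize (Ψ * Matrix.diagonal lam * Ψᵀ) * Ψ = 0) :
    ∃ (σ : Equiv.Perm (Fin n)) (d : Fin n → ℝ),
      (∀ i, d i = 1 ∨ d i = -1) ∧ Ψ = Pm σ d := by
  set M := Ψ * Matrix.diagonal lam * Ψᵀ with hMdef
  have hO' : Ψᵀ * Ψ = 1 := mul_eq_one_comm.mp hO
  -- antisymmetrize M = 0
  have hAM : antisymmetrize M = 0 := by
    have h1 : antisymmetrize M = antisymmetrize M * (Ψ * Ψᵀ) := by rw [hO, mul_one]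
    rwa [← mul_assoc, hA, zero_mul] at h1
  have hMoff : ∀ i j, i ≠ j → M i j = 0 := by
    intro i j hij
    have h := Matrix.ext_iff.mpr hAM i j
    simp only [antisymmetrize, Matrix.of_apply, Matrix.zero_apply] at h
    rcases lt_or_gt_of_ne hij with hlt | hgt
    · rwa [if_pos hlt] at h
    · rw [if_neg (not_lt.2 hgt.le), if_pos hgt, neg_eq_zero] at h; exact h
  set μ : Fin n → ℝ := fun i => M i i with hμ
  have hMdiag : M = Matrix.diagonal μ := by
    ext i j
    by_cases h : i = j
    · subst h; simp [Matrix.diagonal]; rfl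
    · rw [hMoff i j h, Matrix.diagonal_apply_ne _ h]
  -- Ψ * diag lam = diag μ * Ψ
  have hcomm : Ψ * Matrix.diagonal lam = Matrix.diagonal μ * Ψ := by
    have h1 : M * Ψ = Matrix.diagonal μ * Ψ := by rw [hMdiag]
    rw [hMdef, mul_assoc, hO', mul_one] at h1
    exact h1
  have hentry : ∀ i j, Ψ i j * lam j = μ i * Ψ i j := by
    intro i j
    have := Matrix.ext_iff.mpr hcomm i j
    rwa [Matrix.mul_diagonal, Matrix.diagonal_mul] at this
  have hlam_eq : ∀ i j, Ψ i j ≠ 0 → lam j = μ i := by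
    intro i j hne
    have h := hentry i j
    rw [mul_comm (μ i) (Ψ i j)] at h
    exact mul_left_cancel₀ hne h
  have huniq : ∀ i j j', Ψ i j ≠ 0 → Ψ i j' ≠ 0 → j = j' := by
    intro i j j' h1 h2
    exact hlam ((hlam_eq i j h1).trans (hlam_eq i j' h2).symm)
  have hrow : ∀ i, ∃ j, Ψ i j ≠ 0 := by
    intro i
    by_contra hc
    push_neg at hc
    have h := Matrix.ext_iff.mpr hO i i
    rw [Matrix.mul_apply] at h
    simp only [Matrix.transpose_apply, Matrix.one_apply_eq] at h
    rw [Finset.sum_eq_zero (fun j _ => by rw [hc j, zero_mul])] at h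
    exact zero_ne_one h
  set τ : Fin n → Fin n := fun i => Classical.choose (hrow i) with hτ
  have hτne : ∀ i, Ψ i (τ i) ≠ 0 := fun i => Classical.choose_spec (hrow i)
  have hsupp : ∀ i j, j ≠ τ i → Ψ i j = 0 := by
    intro i j hj
    by_contra hc
    exact hj (huniq i j (τ i) hc (hτne i))
  have hτinj : Function.Injective τ := by
    intro i1 i2 h12
    by_contra hne
    have h := Matrix.ext_iff.mpr hO i1 i2
    rw [Matrix.mul_apply] at h
    simp only [Matrix.transpose_apply] at h
    rw [Matrix.one_apply_ne hne] at h
    rw [Finset.sum_eq_single (τ i1)] at h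
    · rw [h12] at h
      exact (mul_ne_zero (h12 ▸ hτne i1) (hτne i2)) h
    · intro j _ hj
      rw [hsupp i1 j hj, zero_mul]
    · simp
  let σ : Equiv.Perm (Fin n) := Equiv.ofBijective τ (Finite.injective_iff_bijective.mp hτinj)
  have hσ : ∀ i, σ i = τ i := fun i => rfl
  refine ⟨σ, fun j => Ψ (σ.symm j) j, ?_, ?_⟩
  · intro j
    rw [← mul_self_eq_one_iff]
    have h := Matrix.ext_iff.mpr hO (σ.symm j) (σ.symm j)
    rw [Matrix.mul_apply, Matrix.one_apply_eq] at h
    simp only [Matrix.transpose_apply] at h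
    rw [Finset.sum_eq_single j] at h
    · exact h
    · intro j' _ hj'
      have : j' ≠ τ (σ.symm j) := by
        rw [← hσ, Equiv.apply_symm_apply]; exact hj'
      rw [hsupp _ _ this, zero_mul]
    · simp
  · ext i j
    rw [Pm_apply]
    by_cases h : σ i = j
    · rw [if_pos h, ← h, Equiv.symm_apply_apply]
    · rw [if_neg h, hsupp i j (fun hc => h (by rw [hσ, ← hc]))]
noncomputable def sgn (b : Bool) : ℝ := if b then 1 else -1

lemma sgn_mul_self (b : Bool) : sgn b * sgn b = 1 := by cases b <;> simp [sgn]

lemma sgn_pm (b : Bool) : sgn b = 1 ∨ sgn b = -1 := by cases b <;> simp [sgn]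

noncomputable def sℝ {n : ℕ} (σ : Equiv.Perm (Fin n)) : ℝ := ((Equiv.Perm.sign σ : ℤ) : ℝ)

lemma sℝ_mul_self {n : ℕ} (σ : Equiv.Perm (Fin n)) : sℝ σ * sℝ σ = 1 := by
  have h := Int.units_mul_self (Equiv.Perm.sign σ)
  have : ((Equiv.Perm.sign σ * Equiv.Perm.sign σ : ℤˣ) : ℤ) = ((1 : ℤˣ) : ℤ) := by rw [h]
  push_cast at this
  unfold sℝ
  exact_mod_cast this

noncomputable def dd {m : ℕ} (σ : Equiv.Perm (Fin (m + 1))) (ε : Fin m → Bool) :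
    Fin (m + 1) → ℝ :=
  Fin.snoc (fun i => sgn (ε i)) (sℝ σ * ∏ i, sgn (ε i))

lemma dd_pm {m : ℕ} (σ : Equiv.Perm (Fin (m + 1))) (ε : Fin m → Bool) (i : Fin (m + 1)) :
    dd σ ε i = 1 ∨ dd σ ε i = -1 := by
  rw [← mul_self_eq_one_iff]
  induction i using Fin.lastCases with
  | last =>
    rw [dd, Fin.snoc_last]
    have hp : (∏ i, sgn (ε i)) * (∏ i, sgn (ε i)) = 1 := by
      rw [← Finset.prod_mul_distrib]
      exact Finset.prod_eq_one fun i _ => sgn_mul_self (ε i)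
    calc sℝ σ * (∏ i, sgn (ε i)) * (sℝ σ * ∏ i, sgn (ε i))
        = (sℝ σ * sℝ σ) * ((∏ i, sgn (ε i)) * ∏ i, sgn (ε i)) := by ring
      _ = 1 := by rw [sℝ_mul_self, hp, one_mul]
  | cast i =>
    rw [dd, Fin.snoc_castSucc]
    exact sgn_mul_self (ε i)

lemma det_G {m : ℕ} (σ : Equiv.Perm (Fin (m + 1))) (ε : Fin m → Bool) :
    (Pm σ (dd σ ε)).det = 1 := by
  rw [det_Pm]
  rw [Fin.prod_univ_castSucc]
  simp only [dd, Fin.snoc_castSucc, Fin.snoc_last]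
  show sℝ σ * ((∏ i, sgn (ε i)) * (sℝ σ * ∏ i, sgn (ε i))) = 1
  have hp : (∏ i, sgn (ε i)) * (∏ i, sgn (ε i)) = 1 := by
    rw [← Finset.prod_mul_distrib]
    exact Finset.prod_eq_one fun i _ => sgn_mul_self (ε i)
  calc sℝ σ * ((∏ i, sgn (ε i)) * (sℝ σ * ∏ i, sgn (ε i)))
      = (sℝ σ * sℝ σ) * ((∏ i, sgn (ε i)) * ∏ i, sgn (ε i)) := by ring
    _ = 1 := by rw [sℝ_mul_self, hp, one_mul]

lemma Pm_inj {n : ℕ} {σ σ' : Equiv.Perm (Fin n)} {d d' : Fin n → ℝ}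
    (hd : ∀ i, d i ≠ 0) (h : Pm σ d = Pm σ' d') : σ = σ' ∧ d = d' := by
  have happ := fun i j => Matrix.ext_iff.mpr h i j
  simp only [Pm_apply] at happ
  have hσ : σ = σ' := Equiv.ext fun i => by
    have h1 := happ i (σ i)
    rw [if_pos rfl] at h1
    by_contra hc
    rw [if_neg (fun he : σ' i = σ i => hc he.symm)] at h1
    exact hd (σ i) h1
  subst hσ
  refine ⟨rfl, funext fun j => ?_⟩
  have h1 := happ (σ.symm j) j
  rwa [if_pos (σ.apply_symm_apply j), if_pos (σ.apply_symm_apply j)] at h1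

lemma count_lemma (m : ℕ) :
    ({Ψ : Matrix (Fin (m+1)) (Fin (m+1)) ℝ |
        ∃ (σ : Equiv.Perm (Fin (m+1))) (d : Fin (m+1) → ℝ),
          (∀ i, d i = 1 ∨ d i = -1) ∧ Ψ = Pm σ d ∧ Ψ.det = 1}.ncard)
      = 2 ^ m * (m+1).factorial := by
  classical
  set G : Equiv.Perm (Fin (m+1)) × (Fin m → Bool) → Matrix (Fin (m+1)) (Fin (m+1)) ℝ :=
    fun p => Pm p.1 (dd p.1 p.2) with hG
  have hrange : {Ψ : Matrix (Fin (m+1)) (Fin (m+1)) ℝ |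
      ∃ (σ : Equiv.Perm (Fin (m+1))) (d : Fin (m+1) → ℝ),
        (∀ i, d i = 1 ∨ d i = -1) ∧ Ψ = Pm σ d ∧ Ψ.det = 1} = Set.range G := by
    ext Ψ
    constructor
    · rintro ⟨σ, d, hd, rfl, hdet⟩
      set ε : Fin m → Bool := fun i => decide (d i.castSucc = 1) with hε
      have hcs : ∀ i : Fin m, sgn (ε i) = d i.castSucc := by
        intro i
        rcases hd i.castSucc with h | h
        · simp [hε, sgn, h]
        · have : (-1 : ℝ) ≠ 1 := by norm_num
          simp [hε, sgn, h, this]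
      have hddeq : dd σ ε = d := by
        funext x
        induction x using Fin.lastCases with
        | last =>
          rw [dd, Fin.snoc_last]
          have hQ : (∏ i, sgn (ε i)) = ∏ i : Fin m, d i.castSucc :=
            Finset.prod_congr rfl fun i _ => hcs i
          rw [hQ]
          have hdet' : sℝ σ * ((∏ i : Fin m, d i.castSucc) * d (Fin.last m)) = 1 := by
            have := det_Pm σ d
            rw [hdet] at this
            rw [Fin.prod_univ_castSucc] at this
            exact this.symm
          have h2 : d (Fin.last m) * d (Fin.last m) = 1 :=
            mul_self_eq_one_iff.mpr (hd _)
          calc sℝ σ * ∏ i : Fin m, d i.castSucc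
              = (d (Fin.last m) * d (Fin.last m)) * (sℝ σ * ∏ i : Fin m, d i.castSucc) := by
                rw [h2, one_mul]
            _ = d (Fin.last m) * (sℝ σ * ((∏ i : Fin m, d i.castSucc) * d (Fin.last m))) := by
                ring
            _ = d (Fin.last m) := by rw [hdet', mul_one]
        | cast i =>
          rw [dd, Fin.snoc_castSucc]
          exact hcs i
      exact ⟨(σ, ε), by rw [hG]; simp only; rw [hddeq]⟩
    · rintro ⟨⟨σ, ε⟩, rfl⟩
      exact ⟨σ, dd σ ε, dd_pm σ ε, rfl, det_G σ ε⟩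
  have hGinj : Function.Injective G := by
    rintro ⟨σ, ε⟩ ⟨σ', ε'⟩ h
    have hd0 : ∀ i, dd σ ε i ≠ 0 := by
      intro i
      rcases dd_pm σ ε i with h' | h' <;> rw [h'] <;> norm_num
    obtain ⟨hσ, hdeq⟩ := Pm_inj hd0 h
    subst hσ
    have hdeq' : dd σ ε = dd σ ε' := hdeq
    have hεeq : ε = ε' := by
      funext i
      have h1 : sgn (ε i) = sgn (ε' i) := by
        have h2 := congrFun hdeq' i.castSucc
        rwa [dd, dd, Fin.snoc_castSucc, Fin.snoc_castSucc] at h2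
      cases hε : ε i <;> cases hε' : ε' i <;> rw [hε, hε'] at h1 <;>
        first | rfl | (exfalso; norm_num [sgn] at h1)
    subst hεeq
    rfl
  rw [hrange, ← Set.image_univ, Set.ncard_image_of_injective _ hGinj, Set.ncard_univ,
    Nat.card_eq_fintype_card, Fintype.card_prod, Fintype.card_perm, Fintype.card_fun]
  simp [mul_comm]

/-- The singular points of the vector field `Ψ ↦ -A(ΨΛΨ⁻¹)Ψ` on `SO(n,ℝ)` (with `Λ`
diagonal with distinct entries) are exactly the signed permutation matrices of
determinant `1`, and there are exactly `2^(n-1) · n!` of them. -/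
theorem toda_singular_points {n : ℕ} (hn : 1 ≤ n) (lam : Fin n → ℝ)
    (hlam : Function.Injective lam) :
    ({Ψ : Matrix (Fin n) (Fin n) ℝ |
        Ψ * Ψᵀ = 1 ∧ Ψ.det = 1 ∧ antisymmetrize (Ψ * Matrix.diagonal lam * Ψᵀ) * Ψ = 0}
      = {Ψ : Matrix (Fin n) (Fin n) ℝ |
        ∃ (σ : Equiv.Perm (Fin n)) (d : Fin n → ℝ),
          (∀ i, d i = 1 ∨ d i = -1) ∧
          Ψ = (Matrix.of fun i j => if σ i = j then (1 : ℝ) else 0) * Matrix.diagonal d ∧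
          Ψ.det = 1}) ∧
    ({Ψ : Matrix (Fin n) (Fin n) ℝ |
        Ψ * Ψᵀ = 1 ∧ Ψ.det = 1 ∧ antisymmetrize (Ψ * Matrix.diagonal lam * Ψᵀ) * Ψ = 0}.ncard
      = 2 ^ (n - 1) * n.factorial) := by
  obtain ⟨m, rfl⟩ : ∃ m, n = m + 1 := ⟨n - 1, (Nat.succ_pred_eq_of_pos hn).symm⟩
  have hset : {Ψ : Matrix (Fin (m+1)) (Fin (m+1)) ℝ |
        Ψ * Ψᵀ = 1 ∧ Ψ.det = 1 ∧ antisymmetrize (Ψ * Matrix.diagonal lam * Ψᵀ) * Ψ = 0}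
      = {Ψ : Matrix (Fin (m+1)) (Fin (m+1)) ℝ |
        ∃ (σ : Equiv.Perm (Fin (m+1))) (d : Fin (m+1) → ℝ),
          (∀ i, d i = 1 ∨ d i = -1) ∧
          Ψ = (Matrix.of fun i j => if σ i = j then (1 : ℝ) else 0) * Matrix.diagonal d ∧
          Ψ.det = 1} := by
    ext Ψ
    simp only [Set.mem_setOf_eq]
    constructor
    · rintro ⟨hO, hdet, hA⟩
      obtain ⟨σ, d, hd, hΨ⟩ := forward lam hlam hO hA
      exact ⟨σ, d, hd, hΨ, hdet⟩
    · rintro ⟨σ, d, hd, hΨ, hdet⟩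
      have hΨ' : Ψ = Pm σ d := hΨ
      subst hΨ'
      obtain ⟨h1, h2⟩ := backward lam σ d hd
      exact ⟨h1, hdet, h2⟩
  refine ⟨hset, ?_⟩
  rw [hset]
  exact count_lemma m
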